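/- Let ε, δ, L be nonnegative real numbers with ε + 3·L·δ < 1/2, and let g : ℝ³ → ℝ be L-Lipschitz with respect to the ℓ¹ norm on ℝ³ (i.e. |g(x) − g(y)| ≤ L·(|x₁ − y₁| + |x₂ − y₂| + |x₃ − y₃|)) and satisfy |g(ι(a), ι(b), ι(c)) − ι(ρ(a,b,c))| ≤ ε for all Booleans a, b, c. Then for every real-valued configuration u : ℤ → ℝ and every Boolean configuration c : ℤ → Bool such that |u(i) − ι(c(i))| ≤ δ for all i ∈ ℤ, thresholding the continuous update of u recovers the exact Rule 110 update of c: for every i ∈ ℤ, θ(g(u(i−1), u(i), u(i+1))) = ρ(c(i−1), c(i), c(i+1)). That is, symbolic dynamics can be recovered from the continuous field even in the presence of bounded perturbations of the cell states. -/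
import Mathlib


/-- Rule 110 local rule. -/
def rho (a b c : Bool) : Bool := (b || c) && !(a && b && c)

/-- Embedding of Booleans into ℝ. -/
noncomputable def iotaB (b : Bool) : ℝ := if b then 1 else 0

/-- Thresholding at 1/2. -/
noncomputable def theta (x : ℝ) : Bool := decide ((1 : ℝ) / 2 ≤ x)

/-- Symbolic Rule 110 dynamics can be recovered from the continuous field even in the
presence of bounded perturbations of the cell states, provided the controller is
`L`-Lipschitz (ℓ¹) and approximates the truth table with error `ε`, with `ε + 3Lδ < 1/2`. -/
theorem nftm_rule110_robust_recovery
    (ε δ L : ℝ) (hε : 0 ≤ ε) (hδ : 0 ≤ δ) (hL : 0 ≤ L)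
    (hsum : ε + 3 * L * δ < 1 / 2)
    (g : ℝ → ℝ → ℝ → ℝ)
    (hLip : ∀ x₁ x₂ x₃ y₁ y₂ y₃ : ℝ,
      |g x₁ x₂ x₃ - g y₁ y₂ y₃| ≤ L * (|x₁ - y₁| + |x₂ - y₂| + |x₃ - y₃|))
    (hg : ∀ a b c : Bool, |g (iotaB a) (iotaB b) (iotaB c) - iotaB (rho a b c)| ≤ ε)
    (u : ℤ → ℝ) (c : ℤ → Bool) (hu : ∀ i : ℤ, |u i - iotaB (c i)| ≤ δ) :
    ∀ i : ℤ, theta (g (u (i - 1)) (u i) (u (i + 1))) = rho (c (i - 1)) (c i) (c (i + 1)) := by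

  intro i
  have key : |g (u (i-1)) (u i) (u (i+1)) - iotaB (rho (c (i-1)) (c i) (c (i+1)))| < 1/2 := by
    have h1 := hLip (u (i-1)) (u i) (u (i+1)) (iotaB (c (i-1))) (iotaB (c i)) (iotaB (c (i+1)))
    have h2 := hg (c (i-1)) (c i) (c (i+1))
    have hs : |u (i-1) - iotaB (c (i-1))| + |u i - iotaB (c i)| + |u (i+1) - iotaB (c (i+1))| ≤ 3*δ := by
      have := hu (i-1); have := hu i; have := hu (i+1); linarith
    have h3 : L * (|u (i-1) - iotaB (c (i-1))| + |u i - iotaB (c i)| + |u (i+1) - iotaB (c (i+1))|) ≤ L * (3*δ) :=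
      mul_le_mul_of_nonneg_left hs hL
    calc |g (u (i-1)) (u i) (u (i+1)) - iotaB (rho (c (i-1)) (c i) (c (i+1)))|
        ≤ |g (u (i-1)) (u i) (u (i+1)) - g (iotaB (c (i-1))) (iotaB (c i)) (iotaB (c (i+1)))|
          + |g (iotaB (c (i-1))) (iotaB (c i)) (iotaB (c (i+1))) - iotaB (rho (c (i-1)) (c i) (c (i+1)))| :=
          abs_sub_le _ _ _
      _ < 1/2 := by linarith
  rcases habs : rho (c (i-1)) (c i) (c (i+1)) with _ | _ <;>
    simp [habs, iotaB] at key <;> rw [abs_lt] at key <;> simp [theta] <;> linarith [key.1, key.2]
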